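/- Let S = s_1,…,s_m have n distinct elements and let F be the set of first-occurrence indices. Then ∑_{i∈F, i≥2} log₂(i−1) + ∑_{i∉F} log₂((i−1)/#_{s_i}(s_1,…,s_{i−1})) ≤ H₀(S)·m + C·m for some absolute constant C. -/

import Mathlib

open Finset
open Nat


lemma log_fact_aux : ∀ n : ℕ, 1 ≤ n → (n : ℝ) * Real.log n ≤ Real.log (n !) + n := by
  intro n hn
  induction n, hn using Nat.le_induction with
  | base => simp
  | succ n hn ih =>
    have hn0 : (0:ℝ) < n := by exact_mod_cast hn
    have hkey : (n : ℝ) * Real.log (n + 1) ≤ (n : ℝ) * Real.log n + 1 := by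
      have h1 : Real.log ((n + 1) / n) ≤ (n + 1) / n - 1 :=
        Real.log_le_sub_one_of_pos (by positivity)
      have h2 : Real.log ((n + 1) / n) = Real.log (n + 1) - Real.log n :=
        Real.log_div (by positivity) (ne_of_gt hn0)
      have h3 : ((n:ℝ) + 1) / n - 1 = 1 / n := by field_simp; ring
      have h4 : Real.log (n+1) - Real.log n ≤ 1 / n := by rw [← h2, ← h3]; exact h1
      have h5 := mul_le_mul_of_nonneg_left h4 (le_of_lt hn0)
      have h6 : (n:ℝ) * (1 / n) = 1 := by field_simp
      rw [h6] at h5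
      nlinarith [h5]
    have hfact : Real.log ((n+1)!) = Real.log (n+1) + Real.log (n !) := by
      rw [Nat.factorial_succ]
      push_cast
      rw [Real.log_mul (by positivity) (by positivity)]
    push_cast
    push_cast at ih
    nlinarith [hkey, ih, hfact]

lemma sum_logb_range : ∀ n : ℕ, ∑ k ∈ Finset.range (n+1), Real.logb 2 k = Real.logb 2 (n !) := by
  intro n
  induction n with
  | zero => simp
  | succ n ih =>
    rw [Finset.sum_range_succ, ih, Nat.factorial_succ]
    push_cast
    rw [Real.logb_mul (by positivity) (by positivity)]
    ring

lemma key_bound (n : ℕ) (hn : 1 ≤ n) :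
    (n : ℝ) * Real.logb 2 n - ∑ k ∈ Finset.range n, Real.logb 2 k ≤ (2 / Real.log 2) * n := by
  obtain ⟨m, rfl⟩ : ∃ m, n = m + 1 := ⟨n - 1, (Nat.succ_pred_eq_of_pos hn).symm⟩
  rw [sum_logb_range]
  have hn0 : (0:ℝ) < (m:ℝ) + 1 := by positivity
  have hlog2 : (0:ℝ) < Real.log 2 := Real.log_pos (by norm_num)
  have h1 : ((m:ℝ)+1) * Real.log ((m:ℝ)+1) ≤ Real.log ((m+1)!) + ((m:ℝ)+1) := by
    have := log_fact_aux (m+1) (Nat.le_add_left 1 m)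
    push_cast at this ⊢; linarith
  have hfs : Real.log ((m+1)!) = Real.log ((m+1) * (m !) : ℕ) := by rw [Nat.factorial_succ]
  have h2 : Real.log (((m+1)*(m !) : ℕ) : ℝ) = Real.log ((m:ℝ)+1) + Real.log (m !) := by
    push_cast
    rw [Real.log_mul (by positivity) (by positivity)]
  have h3 : Real.log ((m:ℝ)+1) ≤ (m:ℝ)+1 := by
    have := Real.log_le_sub_one_of_pos hn0
    linarith
  -- combine: (m+1) log(m+1) - log(m!) ≤ 2(m+1)
  have h4 : ((m:ℝ)+1) * Real.log ((m:ℝ)+1) - Real.log ((m !) : ℕ) ≤ 2*((m:ℝ)+1) := by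
    rw [hfs, h2] at h1
    linarith
  rw [Real.logb, Real.logb]
  push_cast
  rw [div_eq_mul_inv, div_eq_mul_inv, div_eq_mul_inv]
  have hinv : (0:ℝ) < (Real.log 2)⁻¹ := by positivity
  nlinarith [mul_le_mul_of_nonneg_right h4 (le_of_lt hinv)]



lemma sum_prefix_count {α : Type*} [DecidableEq α] (f : ℕ → ℝ) :
    ∀ S : List α, (∑ i : Fin S.length, f ((S.take i.val).count (S.get i))) =
      ∑ a ∈ S.toFinset, ∑ k ∈ Finset.range (S.count a), f k := by
  intro S
  induction S using List.reverseRecOn with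
  | nil => simp
  | append_singleton T a ih =>
    have hlen : (T ++ [a]).length = T.length + 1 := by simp
    have hL : (∑ i : Fin (T ++ [a]).length, f (((T++[a]).take i.val).count ((T++[a]).get i)))
        = (∑ i : Fin T.length, f ((T.take i.val).count (T.get i))) + f (T.count a) := by
      rw [← Fin.sum_congr' (fun i : Fin (T++[a]).length =>
        f (((T++[a]).take i.val).count ((T++[a]).get i))) hlen.symm]
      rw [Fin.sum_univ_castSucc]
      congr 1
      · apply Finset.sum_congr rfl
        intro i _
        have h1 : (T++[a]).take ((Fin.cast hlen.symm i.castSucc).val) = T.take i.val := by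
          simp [List.take_append_of_le_length (le_of_lt i.isLt)]
        have h2 : (T++[a]).get (Fin.cast hlen.symm i.castSucc) = T.get i := by
          have := List.getElem_append_left (as := T) (bs := [a]) i.isLt (h' := by simp)
          simpa using this
        rw [h1, h2]
      · have h1 : (T++[a]).take ((Fin.cast hlen.symm (Fin.last T.length)).val) = T := by
          simp [List.take_left]
        have h2 : (T++[a]).get (Fin.cast hlen.symm (Fin.last T.length)) = a := by
          simp
        rw [h1, h2]
    have hcnt : ∀ b, (T++[a]).count b = T.count b + (if b = a then 1 else 0) := by
      intro b
      rw [List.count_append]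
      congr 1
      simp [List.count_singleton]
      by_cases h : b = a
      · simp [h]
      · simp [h, Ne.symm h]
    have hR : (∑ b ∈ (T++[a]).toFinset, ∑ k ∈ Finset.range ((T++[a]).count b), f k)
        = (∑ b ∈ T.toFinset, ∑ k ∈ Finset.range (T.count b), f k) + f (T.count a) := by
      have hins : (T++[a]).toFinset = insert a T.toFinset := by
        rw [List.toFinset_append, List.toFinset_cons, List.toFinset_nil,
          LawfulSingleton.insert_empty_eq, Finset.union_comm]
        ext x; simp [or_comm]
      rw [hins]
      have hsplit : ∀ b, (∑ k ∈ Finset.range ((T++[a]).count b), f k)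
          = (∑ k ∈ Finset.range (T.count b), f k) + (if b = a then f (T.count b) else 0) := by
        intro b
        rw [hcnt b]
        by_cases hb : b = a
        · simp [hb, Finset.sum_range_succ]
        · simp [hb]
      rw [Finset.sum_congr rfl (fun b _ => hsplit b), Finset.sum_add_distrib,
        Finset.sum_ite_eq' (insert a T.toFinset) a (fun b => f (T.count b)),
        if_pos (Finset.mem_insert_self a T.toFinset)]
      congr 1
      by_cases ha : a ∈ T.toFinset
      · rw [Finset.insert_eq_self.mpr ha]
      · rw [Finset.sum_insert_of_eq_zero_if_notMem]
        intro _
        have : T.count a = 0 := by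
          simp [List.count_eq_zero]
          simpa using ha
        simp [this]
    rw [hL, hR, ih]


/-- Zeroth-order empirical entropy of a sequence. -/
noncomputable def H0 {α : Type*} [DecidableEq α] (S : List α) : ℝ :=
  ∑ a ∈ S.toFinset, ((S.count a : ℝ) / S.length) * Real.logb 2 ((S.length : ℝ) / S.count a)

/-- Lemma 2 (analysis lemma): the total search cost is `(H₀(S) + O(1)) m`. -/
theorem analysis_lemma :
    ∃ C : ℝ, ∀ (α : Type) [LinearOrder α] [DecidableEq α] (S : List α), S ≠ [] →
      (∑ i ∈ Finset.univ.filter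
          (fun i : Fin S.length => S.get i ∉ S.take i.val ∧ 1 ≤ i.val),
          Real.logb 2 (i.val : ℝ)) +
        (∑ i ∈ Finset.univ.filter (fun i : Fin S.length => S.get i ∈ S.take i.val),
          Real.logb 2 ((i.val : ℝ) / ((S.take i.val).count (S.get i) : ℝ)))
      ≤ H0 S * S.length + C * S.length := by
  classical
  refine ⟨2 / Real.log 2, ?_⟩
  intro α _ _ S hS
  have hm0 : 0 < S.length := List.length_pos_iff.mpr hS
  have hm0R : (0:ℝ) < (S.length : ℝ) := by exact_mod_cast hm0
  have hm1R : (1:ℝ) ≤ (S.length : ℝ) := by exact_mod_cast hm0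
  set c : Fin S.length → ℕ := fun i => (S.take i.val).count (S.get i) with hcdef
  set h : Fin S.length → ℝ :=
    fun i => Real.logb 2 (S.length : ℝ) - Real.logb 2 (c i : ℝ) with hhdef
  set A := Finset.univ.filter
      (fun i : Fin S.length => S.get i ∉ S.take i.val ∧ 1 ≤ i.val) with hA
  set B := Finset.univ.filter (fun i : Fin S.length => S.get i ∈ S.take i.val) with hB
  have hdisj : Disjoint A B := by
    rw [Finset.disjoint_left]
    intro i hiA hiB
    rw [hA, Finset.mem_filter] at hiA
    rw [hB, Finset.mem_filter] at hiB
    exact hiA.2.1 hiB.2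
  -- bound on A
  have hbA : ∀ i ∈ A, Real.logb 2 (i.val : ℝ) ≤ h i := by
    intro i hi
    rw [hA, Finset.mem_filter] at hi
    have hc0 : c i = 0 := List.count_eq_zero.mpr hi.2.1
    have hi1 : (1:ℝ) ≤ (i.val : ℝ) := by exact_mod_cast hi.2.2
    have him : (i.val : ℝ) ≤ (S.length : ℝ) := by exact_mod_cast le_of_lt i.isLt
    rw [hhdef]
    simp only [hc0, Nat.cast_zero, Real.logb_zero, sub_zero]
    exact (Real.logb_le_logb one_lt_two (by linarith) hm0R).mpr him
  -- bound on B
  have hbB : ∀ i ∈ B, Real.logb 2 ((i.val : ℝ) / (c i : ℝ)) ≤ h i := by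
    intro i hi
    rw [hB, Finset.mem_filter] at hi
    have hc1 : 0 < c i := List.count_pos_iff.mpr hi.2
    have hi1 : 1 ≤ i.val := by
      rcases Nat.eq_zero_or_pos i.val with h0 | h1
      · exfalso
        rw [h0] at hi
        simp at hi
      · exact h1
    have hi1R : (1:ℝ) ≤ (i.val : ℝ) := by exact_mod_cast hi1
    have hc1R : (1:ℝ) ≤ (c i : ℝ) := by exact_mod_cast hc1
    have him : (i.val : ℝ) ≤ (S.length : ℝ) := by exact_mod_cast le_of_lt i.isLt
    rw [Real.logb_div (by linarith) (by linarith)]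
    simp only [hhdef]
    have := (Real.logb_le_logb one_lt_two (by linarith : (0:ℝ) < (i.val:ℝ)) hm0R).mpr him
    linarith
  have step1 : (∑ i ∈ A, Real.logb 2 (i.val : ℝ)) +
      (∑ i ∈ B, Real.logb 2 ((i.val : ℝ) / ((c i) : ℝ))) ≤ ∑ i : Fin S.length, h i := by
    calc (∑ i ∈ A, Real.logb 2 (i.val : ℝ)) +
        (∑ i ∈ B, Real.logb 2 ((i.val : ℝ) / ((c i) : ℝ)))
        ≤ (∑ i ∈ A, h i) + (∑ i ∈ B, h i) :=
          add_le_add (Finset.sum_le_sum hbA) (Finset.sum_le_sum hbB)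
      _ = ∑ i ∈ A ∪ B, h i := (Finset.sum_union hdisj).symm
      _ ≤ ∑ i : Fin S.length, h i := by
          apply Finset.sum_le_sum_of_subset_of_nonneg (Finset.subset_univ _)
          intro i _ hi
          simp only [hA, hB, Finset.mem_union, Finset.mem_filter, Finset.mem_univ,
            true_and, not_or, not_and, not_le] at hi
          have hc0 : c i = 0 := List.count_eq_zero.mpr hi.2
          rw [hhdef]
          simp only [hc0, Nat.cast_zero, Real.logb_zero, sub_zero]
          exact Real.logb_nonneg one_lt_two hm1R
  have step2 : ∑ i : Fin S.length, h i =
      (S.length : ℝ) * Real.logb 2 (S.length : ℝ)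
        - ∑ i : Fin S.length, Real.logb 2 (c i : ℝ) := by
    rw [hhdef, Finset.sum_sub_distrib]
    simp [Finset.card_univ, mul_comm]
  have step3 : (∑ i : Fin S.length, Real.logb 2 (c i : ℝ)) =
      ∑ a ∈ S.toFinset, ∑ k ∈ Finset.range (S.count a), Real.logb 2 (k : ℝ) :=
    sum_prefix_count (fun k => Real.logb 2 (k : ℝ)) S
  have step4 : H0 S * (S.length : ℝ) =
      ∑ a ∈ S.toFinset, (S.count a : ℝ) * Real.logb 2 ((S.length : ℝ) / (S.count a : ℝ)) := by
    rw [H0, Finset.sum_mul]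
    apply Finset.sum_congr rfl
    intro a _
    field_simp
  have step5 : (S.length : ℝ) = ∑ a ∈ S.toFinset, (S.count a : ℝ) := by
    rw [← List.sum_toFinset_count_eq_length]
    push_cast
    rfl
  have step6 : ∑ a ∈ S.toFinset,
      ((S.count a : ℝ) * Real.logb 2 (S.length : ℝ)
        - ∑ k ∈ Finset.range (S.count a), Real.logb 2 (k : ℝ))
      ≤ ∑ a ∈ S.toFinset,
        ((S.count a : ℝ) * Real.logb 2 ((S.length : ℝ) / (S.count a : ℝ))
          + (2 / Real.log 2) * (S.count a : ℝ)) := by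
    apply Finset.sum_le_sum
    intro a ha
    have hca : 1 ≤ S.count a := List.count_pos_iff.mpr (List.mem_toFinset.mp ha)
    have hcaR : (1:ℝ) ≤ (S.count a : ℝ) := by exact_mod_cast hca
    have hkey := key_bound (S.count a) hca
    rw [Real.logb_div (by linarith) (by linarith)]
    nlinarith [hkey]
  have step7 : (S.length : ℝ) * Real.logb 2 (S.length : ℝ)
        - ∑ a ∈ S.toFinset, ∑ k ∈ Finset.range (S.count a), Real.logb 2 (k : ℝ)
      = ∑ a ∈ S.toFinset,
      ((S.count a : ℝ) * Real.logb 2 (S.length : ℝ)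
        - ∑ k ∈ Finset.range (S.count a), Real.logb 2 (k : ℝ)) := by
    rw [Finset.sum_sub_distrib, ← Finset.sum_mul, ← step5]
  have step8 : ∑ a ∈ S.toFinset,
        ((S.count a : ℝ) * Real.logb 2 ((S.length : ℝ) / (S.count a : ℝ))
          + (2 / Real.log 2) * (S.count a : ℝ))
      = H0 S * (S.length : ℝ) + (2 / Real.log 2) * (S.length : ℝ) := by
    rw [Finset.sum_add_distrib, ← step4, ← Finset.mul_sum, ← step5]
  calc (∑ i ∈ A, Real.logb 2 (i.val : ℝ)) +
      (∑ i ∈ B, Real.logb 2 ((i.val : ℝ) / ((c i) : ℝ)))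
      ≤ ∑ i : Fin S.length, h i := step1
    _ = (S.length : ℝ) * Real.logb 2 (S.length : ℝ)
        - ∑ a ∈ S.toFinset, ∑ k ∈ Finset.range (S.count a), Real.logb 2 (k : ℝ) := by
        rw [step2, step3]
    _ ≤ H0 S * (S.length : ℝ) + (2 / Real.log 2) * (S.length : ℝ) := by
        rw [step7, ← step8]; exact step6
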